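/- Let H : ℝ^{2n} → ℝ^{2n} be a vector field satisfying the Lipschitz bound ‖H(z₁) − H(z₂)‖ ≤ a‖z₁ − z₂‖ for all z₁, z₂ in a set K invariant under the flow, with a > 0. Then every nonconstant periodic orbit of the ODE ż = H(z) contained in K has period τ ≥ 2π/a. -/

import Mathlib

open Real

open MeasureTheory Set AddCircle intervalIntegral in
lemma parseval_periodic {T : ℝ} [hT : Fact (0 < T)] {g : ℝ → ℂ}
    (hg : Continuous g) (hper : ∀ t, g (t + T) = g t) :
    Summable (fun n : ℤ => ‖fourierCoeffOn (lt_add_of_pos_right 0 hT.out) g n‖ ^ 2) ∧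
    (∑' n : ℤ, ‖fourierCoeffOn (lt_add_of_pos_right 0 hT.out) g n‖ ^ 2)
      = (1 / T) * ∫ t in (0:ℝ)..(0 + T), ‖g t‖ ^ 2 := by
  have h0T : g 0 = g T := by simpa using (hper 0).symm
  set G : C(AddCircle T, ℂ) :=
    ⟨AddCircle.liftIco T 0 g, AddCircle.liftIco_zero_continuous h0T hg.continuousOn⟩ with hG
  set GG := ContinuousMap.toLp (E := ℂ) 2 haarAddCircle ℂ G with hGG
  have hcoeff : ∀ n : ℤ, fourierCoeff (GG : AddCircle T → ℂ) n
      = fourierCoeffOn (lt_add_of_pos_right 0 hT.out) g n := by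
    intro n
    rw [fourierCoeff_toLp]
    exact fourierCoeff_liftIco_eq (a := 0) g n
  have hsum : Summable (fun n : ℤ => ‖fourierCoeffOn (lt_add_of_pos_right 0 hT.out) g n‖ ^ 2) := by
    have hm := (fourierBasis.repr GG).property
    have hs := (memℓp_gen_iff (p := 2) (by norm_num)).1 hm
    refine hs.congr fun n => ?_
    rw [fourierBasis_repr, hcoeff n,
      show ((2:ENNReal).toReal) = ((2:ℕ):ℝ) by norm_num, Real.rpow_natCast]
  refine ⟨hsum, ?_⟩
  have hpars := tsum_sq_fourierCoeff GG
  simp_rw [hcoeff] at hpars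
  rw [hpars]
  have h1 : ∫ t : AddCircle T, ‖GG t‖ ^ 2 ∂haarAddCircle
      = ∫ t : AddCircle T, ‖G t‖ ^ 2 ∂haarAddCircle := by
    apply MeasureTheory.integral_congr_ae
    filter_upwards [ContinuousMap.coeFn_toLp (𝕜 := ℂ) (p := 2) (μ := haarAddCircle) G] with x hx
    rw [hx]
  have h2 : ∫ t : AddCircle T, ‖G t‖ ^ 2 ∂(volume : Measure (AddCircle T))
      = T * ∫ t : AddCircle T, ‖G t‖ ^ 2 ∂haarAddCircle := by
    rw [volume_eq_smul_haarAddCircle, MeasureTheory.integral_smul_measure,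
      ENNReal.toReal_ofReal hT.out.le, smul_eq_mul]
  have h3 : ∫ x in (0:ℝ)..(0 + T), ‖G (x : AddCircle T)‖ ^ 2
      = ∫ t : AddCircle T, ‖G t‖ ^ 2 ∂(volume : Measure (AddCircle T)) :=
    AddCircle.intervalIntegral_preimage T 0 (fun z => ‖G z‖ ^ 2)
  have h4 : ∫ x in (0:ℝ)..(0 + T), ‖G (x : AddCircle T)‖ ^ 2
      = ∫ t in (0:ℝ)..(0 + T), ‖g t‖ ^ 2 := by
    apply intervalIntegral.integral_congr
    intro x hx
    rw [Set.uIcc_of_le (by linarith [hT.out] : (0:ℝ) ≤ 0 + T)] at hx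
    have hGx : ∀ y : ℝ, G (y : AddCircle T) = AddCircle.liftIco T 0 g (y : AddCircle T) :=
      fun _ => rfl
    show ‖G (x : AddCircle T)‖ ^ 2 = ‖g x‖ ^ 2
    rcases lt_or_eq_of_le hx.2 with h | h
    · rw [hGx, AddCircle.liftIco_coe_apply ⟨hx.1, h⟩]
    · have hc : (x : AddCircle T) = ((0 : ℝ) : AddCircle T) := by
        rw [h]; simpa using AddCircle.coe_add_period T 0
      rw [hGx, hc, AddCircle.liftIco_coe_apply
        (by constructor <;> [rfl; simpa using hT.out]), h0T, h]
      norm_num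
  rw [h1]
  rw [← h3, h4] at h2
  rw [h2, ← mul_assoc, one_div_mul_cancel hT.out.ne', one_mul]

open MeasureTheory Set intervalIntegral

lemma wirtinger_complex {T : ℝ} [hT : Fact (0 < T)] {f f' : ℝ → ℂ}
    (hf : ∀ t, HasDerivAt f (f' t) t) (hf'c : Continuous f')
    (hper : ∀ t, f (t + T) = f t)
    (hmean : (∫ t in (0:ℝ)..(0 + T), f t) = 0) :
    (∫ t in (0:ℝ)..(0 + T), ‖f t‖ ^ 2)
      ≤ (T / (2 * π)) ^ 2 * ∫ t in (0:ℝ)..(0 + T), ‖f' t‖ ^ 2 := by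
  have hTpos := hT.out
  have hfc : Continuous f := by
    refine continuous_iff_continuousAt.2 fun t => (hf t).continuousAt
  have hper' : ∀ t, f' (t + T) = f' t := by
    intro t
    have h1 : HasDerivAt (fun s : ℝ => f (s + T)) (f' (t + T)) t :=
      HasDerivAt.comp_add_const t T (hf (t + T))
    have h2 : (fun s : ℝ => f (s + T)) = f := funext hper
    rw [h2] at h1
    exact h1.unique (hf t)
  set hab := lt_add_of_pos_right (0:ℝ) hT.out with hhab
  set c := fourierCoeffOn hab f with hc
  set d := fourierCoeffOn hab f' with hd
  have hc0 : c 0 = 0 := by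
    rw [hc, fourierCoeffOn_eq_integral]
    simp only [neg_zero, fourier_zero, one_smul, hmean, smul_zero]
  have hrel : ∀ n : ℤ, n ≠ 0 → ‖c n‖ = T / (2 * π * |(n : ℝ)|) * ‖d n‖ := by
    intro n hn
    have key := fourierCoeffOn_of_hasDerivAt hab hn
      (fun x _ => hf x) (hf'c.intervalIntegrable _ _)
    rw [hper 0, sub_self, mul_zero, zero_sub] at key
    rw [hc, hd, key]
    rw [norm_mul, norm_neg, norm_mul]
    have h2pi : ‖(1:ℂ) / (-2 * π * Complex.I * n)‖ = 1 / (2 * π * |(n : ℝ)|) := by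
      rw [norm_div, norm_one]
      congr 1
      simp only [norm_mul, norm_neg, Complex.norm_ofNat,
        Complex.norm_I, Complex.norm_real, Real.norm_eq_abs, Complex.norm_intCast]
      rw [abs_of_pos pi_pos]
      push_cast
      ring
    rw [h2pi]
    have hTn : ‖((0 + T : ℝ) : ℂ) - ((0 : ℝ) : ℂ)‖ = T := by
      simp [abs_of_pos hTpos]
    rw [hTn]
    ring
  -- pointwise bound
  have hpt : ∀ n : ℤ, ‖c n‖ ^ 2 ≤ (T / (2 * π)) ^ 2 * ‖d n‖ ^ 2 := by
    intro n
    rcases eq_or_ne n 0 with rfl | hn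
    · rw [hc0, norm_zero]
      norm_num
      positivity
    · rw [hrel n hn, mul_pow]
      have h1n : (1:ℝ) ≤ |(n : ℝ)| := by
        rw [← Int.cast_abs]
        exact_mod_cast Int.one_le_abs hn
      have hfrac : T / (2 * π * |(n : ℝ)|) ≤ T / (2 * π) := by
        apply div_le_div_of_nonneg_left hTpos.le (by positivity)
        nlinarith [pi_pos]
      have h0 : 0 ≤ T / (2 * π * |(n : ℝ)|) := by positivity
      exact mul_le_mul_of_nonneg_right (pow_le_pow_left₀ h0 hfrac 2) (by positivity)
  have hparf := parseval_periodic hfc hper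
  have hparf' := parseval_periodic hf'c hper'
  have htsum : (∑' n : ℤ, ‖c n‖ ^ 2) ≤ (T / (2 * π)) ^ 2 * ∑' n : ℤ, ‖d n‖ ^ 2 := by
    rw [← tsum_mul_left]
    exact Summable.tsum_le_tsum hpt hparf.1 (hparf'.1.mul_left _)
  rw [hparf.2, hparf'.2] at htsum
  have hT' : 0 < 1 / T := by positivity
  calc (∫ t in (0:ℝ)..(0 + T), ‖f t‖ ^ 2)
      = T * ((1 / T) * ∫ t in (0:ℝ)..(0 + T), ‖f t‖ ^ 2) := by
        field_simp
    _ ≤ T * ((T / (2 * π)) ^ 2 * ((1 / T) * ∫ t in (0:ℝ)..(0 + T), ‖f' t‖ ^ 2)) := by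
        apply mul_le_mul_of_nonneg_left _ hTpos.le
        exact htsum
    _ = (T / (2 * π)) ^ 2 * ∫ t in (0:ℝ)..(0 + T), ‖f' t‖ ^ 2 := by
        field_simp

/-- Yorke's theorem on minimal periods: if `H` is Lipschitz with constant `a > 0` on a
set `K` and `z` is a nonconstant periodic solution of `ż = H(z)` staying in `K` with
period `τ > 0`, then `τ ≥ 2π/a`. -/
theorem yorke_minimal_period {n : ℕ} (H : EuclideanSpace ℝ (Fin (2 * n)) → EuclideanSpace ℝ (Fin (2 * n)))
    (K : Set (EuclideanSpace ℝ (Fin (2 * n)))) (a : ℝ) (ha : 0 < a)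
    (hLip : ∀ z₁ ∈ K, ∀ z₂ ∈ K, ‖H z₁ - H z₂‖ ≤ a * ‖z₁ - z₂‖)
    (z : ℝ → EuclideanSpace ℝ (Fin (2 * n)))
    (hode : ∀ t, HasDerivAt z (H (z t)) t)
    (hK : ∀ t, z t ∈ K)
    (τ : ℝ) (hτ : 0 < τ)
    (hper : ∀ t, z (t + τ) = z t)
    (hnonconst : ∃ t₁ t₂, z t₁ ≠ z t₂) :
    τ ≥ 2 * π / a := by
  haveI : Fact (0 < τ) := ⟨hτ⟩
  obtain ⟨t₁, t₂, hne⟩ := hnonconst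
  set h := t₂ - t₁ with hh
  -- basic continuity
  have hzc : Continuous z := continuous_iff_continuousAt.2 fun t => (hode t).continuousAt
  have hHzc : Continuous fun t => H (z t) := by
    rw [Metric.continuous_iff]
    intro t ε hε
    obtain ⟨δ, hδ, hδ'⟩ := (Metric.continuous_iff.1 hzc) t (ε / a) (by positivity)
    refine ⟨δ, hδ, fun s hs => ?_⟩
    have h1 := hLip _ (hK s) _ (hK t)
    have h2 := hδ' s hs
    rw [dist_eq_norm] at *
    calc ‖H (z s) - H (z t)‖ ≤ a * ‖z s - z t‖ := h1
      _ < a * (ε / a) := by exact mul_lt_mul_of_pos_left h2 ha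
      _ = ε := by field_simp
  -- the difference function
  set u : ℝ → EuclideanSpace ℝ (Fin (2 * n)) := fun t => z (t + h) - z t with hu_def
  set u' : ℝ → EuclideanSpace ℝ (Fin (2 * n)) :=
    fun t => H (z (t + h)) - H (z t) with hu'_def
  have hu : ∀ t, HasDerivAt u (u' t) t := fun t =>
    (HasDerivAt.comp_add_const t h (hode (t + h))).sub (hode t)
  have huc : Continuous u := (hzc.comp (continuous_id.add continuous_const)).sub hzc
  have hu'c : Continuous u' :=
    (hHzc.comp (continuous_id.add continuous_const)).sub hHzc
  have huper : ∀ t, u (t + τ) = u t := by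
    intro t
    simp only [hu_def]
    rw [add_right_comm, hper (t + h), hper t]
  have hu'bound : ∀ t, ‖u' t‖ ≤ a * ‖u t‖ := fun t => hLip _ (hK (t + h)) _ (hK t)
  -- u(t₁) ≠ 0
  have hut₁ : u t₁ ≠ 0 := by
    simp only [hu_def, hh, add_sub_cancel]
    intro hcon
    exact hne (sub_eq_zero.1 hcon).symm
  -- mean zero
  have hmean : (∫ t in (0:ℝ)..(0 + τ), u t) = 0 := by
    have hint1 : IntervalIntegrable (fun t => z (t + h)) volume 0 (0 + τ) :=
      (hzc.comp (continuous_id.add continuous_const)).intervalIntegrable _ _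
    have hint2 : IntervalIntegrable z volume 0 (0 + τ) := hzc.intervalIntegrable _ _
    simp only [hu_def]
    rw [intervalIntegral.integral_sub hint1 hint2]
    have hshift : (∫ t in (0:ℝ)..(0 + τ), z (t + h)) = ∫ t in (0 + h:ℝ)..(0 + τ + h), z t :=
      intervalIntegral.integral_comp_add_right z h
    rw [hshift]
    have hperz : Function.Periodic z τ := hper
    have := hperz.intervalIntegral_add_eq (0 + h) 0
    rw [sub_eq_zero]
    rw [show (0 + τ + h : ℝ) = 0 + h + τ by ring]
    exact this
  -- Wirtinger applied coordinatewise
  have hIu : IntervalIntegrable (fun t => ‖u t‖ ^ 2) volume 0 (0 + τ) :=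
    ((huc.norm).pow 2).intervalIntegrable _ _
  have hIu' : IntervalIntegrable (fun t => ‖u' t‖ ^ 2) volume 0 (0 + τ) :=
    ((hu'c.norm).pow 2).intervalIntegrable _ _
  have hnormsq : ∀ v : EuclideanSpace ℝ (Fin (2 * n)), ‖v‖ ^ 2 = ∑ i, ‖v i‖ ^ 2 := by
    intro v
    rw [EuclideanSpace.norm_eq, Real.sq_sqrt (by positivity)]
  have key : (∫ t in (0:ℝ)..(0 + τ), ‖u t‖ ^ 2)
      ≤ (τ / (2 * π)) ^ 2 * ∫ t in (0:ℝ)..(0 + τ), ‖u' t‖ ^ 2 := by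
    have hcoord : ∀ i : Fin (2 * n),
        (∫ t in (0:ℝ)..(0 + τ), ‖u t i‖ ^ 2)
          ≤ (τ / (2 * π)) ^ 2 * ∫ t in (0:ℝ)..(0 + τ), ‖u' t i‖ ^ 2 := by
      intro i
      set L : EuclideanSpace ℝ (Fin (2 * n)) →L[ℝ] ℂ :=
        Complex.ofRealCLM.comp (EuclideanSpace.proj i) with hLdef
      have hfd : ∀ t, HasDerivAt (fun s => L (u s)) (L (u' t)) t :=
        fun t => (L.hasFDerivAt.comp_hasDerivAt t (hu t))
      have hf'c : Continuous fun t => L (u' t) := L.continuous.comp hu'c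
      have hperL : ∀ t, L (u (t + τ)) = L (u t) := fun t => by rw [huper t]
      have hmeanL : (∫ t in (0:ℝ)..(0 + τ), L (u t)) = 0 := by
        rw [L.intervalIntegral_comp_comm (huc.intervalIntegrable _ _), hmean, L.map_zero]
      have hw := wirtinger_complex (T := τ) hfd hf'c hperL hmeanL
      have hn1 : ∀ v : EuclideanSpace ℝ (Fin (2 * n)), ‖L v‖ = ‖v i‖ := by
        intro v
        simp [hLdef]
      simpa only [hn1] using hw
    have hIui : ∀ i : Fin (2 * n),
        IntervalIntegrable (fun t => ‖u t i‖ ^ 2) volume 0 (0 + τ) := fun i =>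
      ((((EuclideanSpace.proj (𝕜 := ℝ) i).continuous.comp huc).norm).pow 2).intervalIntegrable _ _
    have hIu'i : ∀ i : Fin (2 * n),
        IntervalIntegrable (fun t => ‖u' t i‖ ^ 2) volume 0 (0 + τ) := fun i =>
      ((((EuclideanSpace.proj (𝕜 := ℝ) i).continuous.comp hu'c).norm).pow 2).intervalIntegrable _ _
    calc (∫ t in (0:ℝ)..(0 + τ), ‖u t‖ ^ 2)
        = ∑ i, ∫ t in (0:ℝ)..(0 + τ), ‖u t i‖ ^ 2 := by
          simp_rw [hnormsq]
          exact intervalIntegral.integral_finset_sum (fun i _ => hIui i)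
      _ ≤ ∑ i, (τ / (2 * π)) ^ 2 * ∫ t in (0:ℝ)..(0 + τ), ‖u' t i‖ ^ 2 :=
          Finset.sum_le_sum fun i _ => hcoord i
      _ = (τ / (2 * π)) ^ 2 * ∑ i, ∫ t in (0:ℝ)..(0 + τ), ‖u' t i‖ ^ 2 := by
          rw [Finset.mul_sum]
      _ = (τ / (2 * π)) ^ 2 * ∫ t in (0:ℝ)..(0 + τ), ‖u' t‖ ^ 2 := by
          rw [← intervalIntegral.integral_finset_sum (fun i _ => hIu'i i)]
          simp_rw [hnormsq]
  -- Lipschitz bound on the derivative integral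
  have key2 : (∫ t in (0:ℝ)..(0 + τ), ‖u' t‖ ^ 2)
      ≤ a ^ 2 * ∫ t in (0:ℝ)..(0 + τ), ‖u t‖ ^ 2 := by
    rw [← intervalIntegral.integral_const_mul]
    refine intervalIntegral.integral_mono_on (by linarith) hIu' (hIu.const_mul _) fun x _ => ?_
    have hb := hu'bound x
    nlinarith [norm_nonneg (u' x), norm_nonneg (u x)]
  -- positivity of the integral
  have hIpos : 0 < ∫ t in (0:ℝ)..(0 + τ), ‖u t‖ ^ 2 := by
    set g : ℝ → ℝ := fun t => ‖u t‖ ^ 2 with hgdef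
    have hgc : Continuous g := (huc.norm).pow 2
    have hgint : ∀ s₁ s₂ : ℝ, IntervalIntegrable g volume s₁ s₂ := fun _ _ =>
      hgc.intervalIntegrable _ _
    have hgper : Function.Periodic g τ := fun t => by simp only [hgdef, huper t]
    have hg0 : 0 < g t₁ := by
      have := norm_pos_iff.2 hut₁
      positivity
    obtain ⟨δ, hδpos, hδ⟩ := Metric.continuous_iff.1 hgc t₁ (g t₁ / 2) (by linarith)
    set δ' := min (δ / 2) τ with hδ'def
    have hδ'pos : 0 < δ' := lt_min (by linarith) hτ
    have hδ'le : δ' ≤ τ := min_le_right _ _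
    have hlow : ∀ x ∈ Icc t₁ (t₁ + δ'), g t₁ / 2 ≤ g x := by
      intro x hx
      have hd : dist x t₁ < δ := by
        rw [Real.dist_eq, abs_of_nonneg (by linarith [hx.1])]
        have h1 := hx.2
        have h2 : δ' ≤ δ / 2 := min_le_left _ _
        linarith
      have h3 := hδ x hd
      rw [Real.dist_eq] at h3
      have h4 := abs_lt.1 h3
      linarith [h4.1]
    have h1 : g t₁ / 2 * δ' ≤ ∫ x in t₁..(t₁ + δ'), g x := by
      have hconst : (∫ _x in t₁..(t₁ + δ'), g t₁ / 2) = δ' * (g t₁ / 2) := by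
        rw [intervalIntegral.integral_const, smul_eq_mul, add_sub_cancel_left]
      calc g t₁ / 2 * δ' = ∫ _x in t₁..(t₁ + δ'), g t₁ / 2 := by rw [hconst]; ring
        _ ≤ ∫ x in t₁..(t₁ + δ'), g x :=
            intervalIntegral.integral_mono_on (by linarith)
              (intervalIntegrable_const) (hgint _ _) hlow
    have h2 : (0:ℝ) ≤ ∫ x in (t₁ + δ')..(t₁ + τ), g x := by
      apply intervalIntegral.integral_nonneg (by linarith)
      intro x _
      positivity
    have h3 : (∫ x in t₁..(t₁ + τ), g x)
        = (∫ x in t₁..(t₁ + δ'), g x) + ∫ x in (t₁ + δ')..(t₁ + τ), g x :=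
      (intervalIntegral.integral_add_adjacent_intervals (hgint _ _) (hgint _ _)).symm
    have h4 : (∫ x in (0:ℝ)..(0 + τ), g x) = ∫ x in t₁..(t₁ + τ), g x :=
      hgper.intervalIntegral_add_eq 0 t₁
    have : 0 < g t₁ / 2 * δ' := by positivity
    calc (0:ℝ) < g t₁ / 2 * δ' := this
      _ ≤ ∫ x in t₁..(t₁ + τ), g x := by linarith
      _ = ∫ t in (0:ℝ)..(0 + τ), ‖u t‖ ^ 2 := h4.symm
  -- combine
  have hchain : (∫ t in (0:ℝ)..(0 + τ), ‖u t‖ ^ 2)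
      ≤ (τ * a / (2 * π)) ^ 2 * ∫ t in (0:ℝ)..(0 + τ), ‖u t‖ ^ 2 := by
    calc (∫ t in (0:ℝ)..(0 + τ), ‖u t‖ ^ 2)
        ≤ (τ / (2 * π)) ^ 2 * ∫ t in (0:ℝ)..(0 + τ), ‖u' t‖ ^ 2 := key
      _ ≤ (τ / (2 * π)) ^ 2 * (a ^ 2 * ∫ t in (0:ℝ)..(0 + τ), ‖u t‖ ^ 2) := by
          apply mul_le_mul_of_nonneg_left key2 (by positivity)
      _ = (τ * a / (2 * π)) ^ 2 * ∫ t in (0:ℝ)..(0 + τ), ‖u t‖ ^ 2 := by ring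
  have h1le : 1 ≤ (τ * a / (2 * π)) ^ 2 := by
    by_contra hlt
    push_neg at hlt
    nlinarith [hIpos, hchain]
  rw [ge_iff_le, div_le_iff₀ ha]
  by_contra hcon
  push_neg at hcon
  have hq : τ * a / (2 * π) < 1 := (div_lt_one (by positivity)).2 hcon
  have hq0 : 0 ≤ τ * a / (2 * π) := by positivity
  nlinarith
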